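/- Let t > 0, let 0<ε≤M, let γ ∈ [ε,M], set τ = 1/γ, and let f be twice continuously differentiable on [-1/ε,t]. Then |∫₀ᵗ f(s)·exp(γ(s-t)) ds - f(t-τ)/γ| ≤ |[t·f'(t-τ) - f(t-τ)]·τ·exp(-γt)| + (τ³/2)·max_{s∈[-1/ε,t]}|f''(s)| + (1/2)·τ·(τ² + t²)·exp(-γt)·max_{s∈[-1/ε,t]}|f''(s)|. -/

import Mathlib

open intervalIntegral MeasureTheory

lemma taylor2_bound {f f' f'' : ℝ → ℝ} {A B K a s : ℝ}
    (hf' : ∀ x ∈ Set.Icc A B, HasDerivAt f (f' x) x)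
    (hf'' : ∀ x ∈ Set.Icc A B, HasDerivAt f' (f'' x) x)
    (hf''c : ContinuousOn f'' (Set.Icc A B))
    (hK : ∀ x ∈ Set.Icc A B, |f'' x| ≤ K)
    (ha : a ∈ Set.Icc A B) (hs : s ∈ Set.Icc A B) :
    |f s - f a - f' a * (s - a)| ≤ K / 2 * (s - a)^2 := by
  have hsub : Set.uIcc a s ⊆ Set.Icc A B := Set.uIcc_subset_Icc ha hs
  have hint : IntervalIntegrable (fun u => f'' u * (s - u)) volume a s :=
    ((hf''c.mono hsub).mul ((continuous_const.sub continuous_id).continuousOn)).intervalIntegrable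
  have hftc : (∫ u in a..s, f'' u * (s - u)) = f s - f a - f' a * (s - a) := by
    have h1 : ∀ u ∈ Set.uIcc a s,
        HasDerivAt (fun u => f u + f' u * (s - u)) (f'' u * (s - u)) u := by
      intro u hu
      have h := ((hf' u (hsub hu)).add
        ((hf'' u (hsub hu)).mul ((hasDerivAt_const u s).sub (hasDerivAt_id' u))))
      refine h.congr_deriv ?_
      simp only [Pi.sub_apply]
      ring
    rw [intervalIntegral.integral_eq_sub_of_hasDerivAt h1 hint]
    ring
  rw [← hftc]
  rcases le_total a s with h | h
  · have h1 : ‖∫ u in a..s, f'' u * (s - u)‖ ≤ ∫ u in a..s, ‖f'' u * (s - u)‖ :=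
      intervalIntegral.norm_integral_le_integral_norm h
    have h2 : (∫ u in a..s, ‖f'' u * (s - u)‖) ≤ ∫ u in a..s, K * (s - u) := by
      apply intervalIntegral.integral_mono_on h hint.norm
      · exact (continuous_const.mul (continuous_const.sub continuous_id)).intervalIntegrable a s
      · intro u hu
        have hu' : u ∈ Set.Icc A B := hsub (by rw [Set.uIcc_of_le h]; exact hu)
        have h3 : (0:ℝ) ≤ s - u := by linarith [hu.2]
        have h5 := hK u hu'
        have hK0 : 0 ≤ K := le_trans (abs_nonneg _) h5
        calc ‖f'' u * (s - u)‖ = |f'' u| * (s - u) := by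
              rw [norm_mul, Real.norm_eq_abs, Real.norm_eq_abs, abs_of_nonneg h3]
          _ ≤ K * (s - u) := by nlinarith
    have h4 : (∫ u in a..s, K * (s - u)) = K / 2 * (s - a)^2 := by
      have h5 : ∀ u ∈ Set.uIcc a s,
          HasDerivAt (fun u => -(K * (s - u)^2 / 2)) (K * (s - u)) u := by
        intro u _
        have h := ((((hasDerivAt_const u s).sub (hasDerivAt_id' u)).pow 2).const_mul
          K).div_const 2 |>.neg
        refine h.congr_deriv ?_
        simp only [Pi.sub_apply]
        push_cast
        ring
      rw [intervalIntegral.integral_eq_sub_of_hasDerivAt h5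
        ((continuous_const.mul (continuous_const.sub continuous_id)).intervalIntegrable a s)]
      ring
    calc |∫ u in a..s, f'' u * (s - u)| ≤ ∫ u in a..s, ‖f'' u * (s - u)‖ := h1
      _ ≤ ∫ u in a..s, K * (s - u) := h2
      _ = K / 2 * (s - a)^2 := h4
  · have heq : |∫ u in a..s, f'' u * (s - u)| = |∫ u in s..a, f'' u * (s - u)| := by
      rw [intervalIntegral.integral_symm, abs_neg]
    rw [heq]
    have hint' : IntervalIntegrable (fun u => f'' u * (s - u)) volume s a := hint.symm
    have h1 : ‖∫ u in s..a, f'' u * (s - u)‖ ≤ ∫ u in s..a, ‖f'' u * (s - u)‖ :=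
      intervalIntegral.norm_integral_le_integral_norm h
    have h2 : (∫ u in s..a, ‖f'' u * (s - u)‖) ≤ ∫ u in s..a, K * (u - s) := by
      apply intervalIntegral.integral_mono_on h hint'.norm
      · exact (continuous_const.mul (continuous_id.sub continuous_const)).intervalIntegrable s a
      · intro u hu
        have hu' : u ∈ Set.Icc A B := Set.uIcc_subset_Icc hs ha (by
          rw [Set.uIcc_of_le h]; exact hu)
        have h3 : (0:ℝ) ≤ u - s := by linarith [hu.1]
        have h5 := hK u hu'
        have hK0 : 0 ≤ K := le_trans (abs_nonneg _) h5
        calc ‖f'' u * (s - u)‖ = |f'' u| * (u - s) := by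
              rw [norm_mul, Real.norm_eq_abs, Real.norm_eq_abs, abs_sub_comm, abs_of_nonneg h3]
          _ ≤ K * (u - s) := by nlinarith
    have h4 : (∫ u in s..a, K * (u - s)) = K / 2 * (s - a)^2 := by
      have h5 : ∀ u ∈ Set.uIcc s a,
          HasDerivAt (fun u => K * (u - s)^2 / 2) (K * (u - s)) u := by
        intro u _
        have h := ((((hasDerivAt_id' u).sub_const s).pow 2).const_mul K).div_const 2
        refine h.congr_deriv ?_
        push_cast
        ring
      rw [intervalIntegral.integral_eq_sub_of_hasDerivAt h5
        ((continuous_const.mul (continuous_id.sub continuous_const)).intervalIntegrable s a)]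
      ring
    calc |∫ u in s..a, f'' u * (s - u)| ≤ ∫ u in s..a, ‖f'' u * (s - u)‖ := h1
      _ ≤ ∫ u in s..a, K * (u - s) := h2
      _ = K / 2 * (s - a)^2 := h4

/-- Quadrature remainder estimate in the D-QSSA analysis: for `γ ∈ [ε,M]`,
`τ = 1/γ`, and `f ∈ C²([-1/ε,t])`,
`|∫₀ᵗ f(s)·exp(γ(s-t)) ds - f(t-τ)/γ|
  ≤ |[t·f'(t-τ) - f(t-τ)]·τ·exp(-γt)| + (τ³/2)·max|f''|
    + (1/2)·τ·(τ² + t²)·exp(-γt)·max|f''|`,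
where the maxima of `|f''|` are taken over `[-1/ε,t]`. -/
theorem dqssa_quadrature_remainder_bound
    (t ε M γ : ℝ) (ht : 0 < t) (hε : 0 < ε) (hεM : ε ≤ M)
    (hγ : γ ∈ Set.Icc ε M)
    (f f' f'' : ℝ → ℝ)
    (hf' : ∀ s ∈ Set.Icc (-(1/ε)) t, HasDerivAt f (f' s) s)
    (hf'' : ∀ s ∈ Set.Icc (-(1/ε)) t, HasDerivAt f' (f'' s) s)
    (hf''c : ContinuousOn f'' (Set.Icc (-(1/ε)) t)) :
    |(∫ s in (0:ℝ)..t, f s * Real.exp (γ * (s - t))) - f (t - 1/γ) / γ|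
      ≤ |(t * f' (t - 1/γ) - f (t - 1/γ)) * (1/γ) * Real.exp (-γ * t)|
        + ((1/γ)^3 / 2) * sSup ((fun s => |f'' s|) '' Set.Icc (-(1/ε)) t)
        + (1/2) * (1/γ) * ((1/γ)^2 + t^2) * Real.exp (-γ * t)
            * sSup ((fun s => |f'' s|) '' Set.Icc (-(1/ε)) t) := by
  have hγ0 : 0 < γ := lt_of_lt_of_le hε hγ.1
  have hγne : γ ≠ 0 := ne_of_gt hγ0
  set A : ℝ := -(1/ε) with hA
  set τ : ℝ := 1/γ with hτdef
  set a : ℝ := t - τ with hadef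
  set K : ℝ := sSup ((fun s => |f'' s|) '' Set.Icc A t) with hKdef
  have hτ0 : 0 < τ := by rw [hτdef]; positivity
  have hγτ : γ * τ = 1 := by rw [hτdef]; field_simp
  have hτε : τ ≤ 1/ε := by
    rw [hτdef]
    exact one_div_le_one_div_of_le hε hγ.1
  have hA0 : A < 0 := by
    have : (0:ℝ) < 1/ε := by positivity
    rw [hA]; linarith
  have haI : a ∈ Set.Icc A t := by
    constructor
    · rw [hadef, hA]; linarith
    · rw [hadef]; linarith
  have hcomp : IsCompact (Set.Icc A t) := isCompact_Icc
  have habs_c : ContinuousOn (fun s => |f'' s|) (Set.Icc A t) := hf''c.abs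
  have hbdd : BddAbove ((fun s => |f'' s|) '' Set.Icc A t) :=
    (hcomp.image_of_continuousOn habs_c).bddAbove
  have hK : ∀ x ∈ Set.Icc A t, |f'' x| ≤ K := fun x hx =>
    le_csSup hbdd (Set.mem_image_of_mem _ hx)
  have hK0 : 0 ≤ K := le_trans (abs_nonneg _) (hK t ⟨le_of_lt (lt_trans hA0 ht), le_rfl⟩)
  have hsub0t : Set.Icc (0:ℝ) t ⊆ Set.Icc A t :=
    Set.Icc_subset_Icc (le_of_lt hA0) le_rfl
  have huIcc : Set.uIcc (0:ℝ) t = Set.Icc 0 t := Set.uIcc_of_le ht.le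
  have hfc : ContinuousOn f (Set.Icc A t) := fun x hx =>
    (hf' x hx).continuousAt.continuousWithinAt
  have hec : Continuous fun s => Real.exp (γ * (s - t)) := by fun_prop
  have hIf : IntervalIntegrable (fun s => f s * Real.exp (γ * (s - t))) volume 0 t := by
    apply ContinuousOn.intervalIntegrable
    exact ((hfc.mono (huIcc ▸ hsub0t)).mul hec.continuousOn)
  -- E0
  have hE0 : (∫ s in (0:ℝ)..t, Real.exp (γ * (s - t))) = (1 - Real.exp (-γ * t)) * τ := by
    have h1 : ∀ s ∈ Set.uIcc (0:ℝ) t,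
        HasDerivAt (fun u => Real.exp (γ * (u - t)) * τ) (Real.exp (γ * (s - t))) s := by
      intro s _
      have h : HasDerivAt (fun u => Real.exp (γ * (u - t)) * τ)
          (Real.exp (γ * (s - t)) * (γ * 1) * τ) s :=
        ((((hasDerivAt_id' s).sub_const t).const_mul γ).exp).mul_const τ
      convert h using 1
      rw [hτdef]
      field_simp
    rw [intervalIntegral.integral_eq_sub_of_hasDerivAt h1 (hec.intervalIntegrable 0 t)]
    have h2 : γ * ((0:ℝ) - t) = -γ * t := by ring
    rw [h2, sub_self, mul_zero, Real.exp_zero]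
    ring
  -- E1
  have hE1 : (∫ s in (0:ℝ)..t, (s - a) * Real.exp (γ * (s - t))) = t * τ * Real.exp (-γ * t) := by
    have h1 : ∀ s ∈ Set.uIcc (0:ℝ) t,
        HasDerivAt (fun u => ((u - a) * τ - τ^2) * Real.exp (γ * (u - t)))
          ((s - a) * Real.exp (γ * (s - t))) s := by
      intro s _
      have hd : HasDerivAt (fun u => ((u - a) * τ - τ^2) * Real.exp (γ * (u - t)))
          ((1 * τ) * Real.exp (γ * (s - t)) +
            ((s - a) * τ - τ^2) * (Real.exp (γ * (s - t)) * (γ * 1))) s :=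
        ((((hasDerivAt_id' s).sub_const a).mul_const τ).sub_const (τ^2)).mul
          ((((hasDerivAt_id' s).sub_const t).const_mul γ).exp)
      convert hd using 1
      rw [hτdef]
      field_simp
      ring
    rw [intervalIntegral.integral_eq_sub_of_hasDerivAt h1 (by
      apply Continuous.intervalIntegrable; fun_prop)]
    have h3 : γ * ((0:ℝ) - t) = -γ * t := by ring
    rw [h3, sub_self, mul_zero, Real.exp_zero, hadef]
    ring
  -- E2
  have hE2 : (∫ s in (0:ℝ)..t, (s - a)^2 * Real.exp (γ * (s - t)))
      = τ^3 - τ * (t^2 + τ^2) * Real.exp (-γ * t) := by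
    have h1 : ∀ s ∈ Set.uIcc (0:ℝ) t,
        HasDerivAt (fun u => ((u - a)^2 * τ - 2 * (u - a) * τ^2 + 2 * τ^3) * Real.exp (γ * (u - t)))
          ((s - a)^2 * Real.exp (γ * (s - t))) s := by
      intro s _
      have hp : HasDerivAt (fun u => ((u - a)^2 * τ - 2 * (u - a) * τ^2 + 2 * τ^3))
          ((2 * (s - a) * τ - 2 * τ^2)) s := by
        have h := ((((hasDerivAt_id' s).sub_const a).pow 2).mul_const τ).sub
          ((((hasDerivAt_id' s).sub_const a).const_mul 2).mul_const (τ^2)) |>.add_const (2 * τ^3)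
        refine h.congr_deriv ?_
        push_cast
        ring
      have hd := hp.mul ((((hasDerivAt_id' s).sub_const t).const_mul γ).exp)
      refine hd.congr_deriv ?_
      rw [hτdef]
      field_simp
      ring
    rw [intervalIntegral.integral_eq_sub_of_hasDerivAt h1 (by
      apply Continuous.intervalIntegrable; fun_prop)]
    have h3 : γ * ((0:ℝ) - t) = -γ * t := by ring
    rw [h3, sub_self, mul_zero, Real.exp_zero, hadef]
    ring
  -- splitting
  have hIe : IntervalIntegrable (fun s => Real.exp (γ * (s - t))) volume 0 t :=
    hec.intervalIntegrable 0 t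
  have hIe1 : IntervalIntegrable (fun s => (s - a) * Real.exp (γ * (s - t))) volume 0 t := by
    apply Continuous.intervalIntegrable; fun_prop
  have hsplit : (∫ s in (0:ℝ)..t, (f s - f a - f' a * (s - a)) * Real.exp (γ * (s - t)))
      = (∫ s in (0:ℝ)..t, f s * Real.exp (γ * (s - t)))
        - f a * ((1 - Real.exp (-γ * t)) * τ) - f' a * (t * τ * Real.exp (-γ * t)) := by
    rw [← hE0, ← hE1, ← intervalIntegral.integral_const_mul, ← intervalIntegral.integral_const_mul,
      ← intervalIntegral.integral_sub hIf (hIe.const_mul (f a)),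
      ← intervalIntegral.integral_sub (hIf.sub (hIe.const_mul (f a))) (hIe1.const_mul (f' a))]
    apply intervalIntegral.integral_congr
    intro s _
    ring
  -- bound on remainder integral
  have hRbound : |∫ s in (0:ℝ)..t, (f s - f a - f' a * (s - a)) * Real.exp (γ * (s - t))|
      ≤ K / 2 * (τ^3 - τ * (t^2 + τ^2) * Real.exp (-γ * t)) := by
    have hRc : ContinuousOn (fun s => (f s - f a - f' a * (s - a)) * Real.exp (γ * (s - t)))
        (Set.Icc (0:ℝ) t) := by
      apply ContinuousOn.mul _ hec.continuousOn
      exact ((hfc.mono hsub0t).sub continuousOn_const).sub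
        (continuousOn_const.mul ((continuous_id.sub continuous_const).continuousOn))
    have hIR : IntervalIntegrable (fun s => (f s - f a - f' a * (s - a)) * Real.exp (γ * (s - t)))
        volume 0 t := by
      apply ContinuousOn.intervalIntegrable
      rw [huIcc]; exact hRc
    have h1 : ‖∫ s in (0:ℝ)..t, (f s - f a - f' a * (s - a)) * Real.exp (γ * (s - t))‖
        ≤ ∫ s in (0:ℝ)..t, ‖(f s - f a - f' a * (s - a)) * Real.exp (γ * (s - t))‖ :=
      intervalIntegral.norm_integral_le_integral_norm ht.le
    have h2 : (∫ s in (0:ℝ)..t, ‖(f s - f a - f' a * (s - a)) * Real.exp (γ * (s - t))‖)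
        ≤ ∫ s in (0:ℝ)..t, K / 2 * ((s - a)^2 * Real.exp (γ * (s - t))) := by
      apply intervalIntegral.integral_mono_on ht.le hIR.norm
      · apply Continuous.intervalIntegrable; fun_prop
      · intro s hs
        have hsI : s ∈ Set.Icc A t := hsub0t hs
        have htay := taylor2_bound hf' hf'' hf''c hK haI hsI
        have hep : 0 < Real.exp (γ * (s - t)) := Real.exp_pos _
        calc ‖(f s - f a - f' a * (s - a)) * Real.exp (γ * (s - t))‖
            = |f s - f a - f' a * (s - a)| * Real.exp (γ * (s - t)) := by
              rw [norm_mul, Real.norm_eq_abs, Real.norm_eq_abs, abs_of_pos hep]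
          _ ≤ (K / 2 * (s - a)^2) * Real.exp (γ * (s - t)) :=
              mul_le_mul_of_nonneg_right htay hep.le
          _ = K / 2 * ((s - a)^2 * Real.exp (γ * (s - t))) := by ring
    have h3 : (∫ s in (0:ℝ)..t, K / 2 * ((s - a)^2 * Real.exp (γ * (s - t))))
        = K / 2 * (τ^3 - τ * (t^2 + τ^2) * Real.exp (-γ * t)) := by
      rw [intervalIntegral.integral_const_mul, hE2]
    calc |∫ s in (0:ℝ)..t, (f s - f a - f' a * (s - a)) * Real.exp (γ * (s - t))| ≤ _ := h1
      _ ≤ _ := h2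
      _ = _ := h3
  -- final assembly
  have hfin : (∫ s in (0:ℝ)..t, f s * Real.exp (γ * (s - t))) - f a / γ
      = (t * f' a - f a) * τ * Real.exp (-γ * t)
        + (∫ s in (0:ℝ)..t, (f s - f a - f' a * (s - a)) * Real.exp (γ * (s - t))) := by
    rw [hsplit]
    have hfa : f a / γ = f a * τ := by rw [hτdef]; ring
    rw [hfa]
    ring
  rw [hfin]
  refine le_trans (abs_add_le _ _) ?_
  have hE : 0 < Real.exp (-γ * t) := Real.exp_pos _
  have hX : 0 ≤ τ * (t^2 + τ^2) * Real.exp (-γ * t) := by positivity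
  have hineq : K / 2 * (τ^3 - τ * (t^2 + τ^2) * Real.exp (-γ * t))
      ≤ τ^3 / 2 * K + 1/2 * τ * (τ^2 + t^2) * Real.exp (-γ * t) * K := by
    nlinarith [mul_nonneg hK0 hX]
  have hgoal : |(t * f' a - f a) * τ * Real.exp (-γ * t)|
        + |∫ s in (0:ℝ)..t, (f s - f a - f' a * (s - a)) * Real.exp (γ * (s - t))|
      ≤ |(t * f' a - f a) * τ * Real.exp (-γ * t)|
        + (τ^3 / 2 * K + 1/2 * τ * (τ^2 + t^2) * Real.exp (-γ * t) * K) := by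
    linarith [hRbound, hineq]
  refine le_trans hgoal ?_
  apply le_of_eq
  ring
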